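/- Suppose smooth functions φ, f, h : I → ℝ with φ, f > 0 satisfy the three ODEs: (n−2)φ''/φ + h'' − m f''/f − 2m(φ'/φ)(f'/f) + 2(φ'/φ)h' = 0; φ''/φ − (n−1)(φ'/φ)² + m(φ'/φ)(f'/f) − (φ'/φ)h' = 0; −f''/f + (n−2)(φ'/φ)(f'/f) − (m−1)(f'/f)² + (f'/f)h' = 0; and suppose φ'/φ = k(f'/f) for a constant k. Then setting x = f'/f and y = h' + ((n−2)k − m)(f'/f), the pair (x, y) satisfies y' = [m + (n−2)k²]x² − 2kxy and x' = xy. -/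

import Mathlib

lemma diffAt_deriv_of_contDiffAt {f : ℝ → ℝ} {ξ : ℝ} (hf : ContDiffAt ℝ 2 f ξ) :
    DifferentiableAt ℝ (deriv f) ξ := by
  have h1 : ContDiffAt ℝ 1 (fderiv ℝ f) ξ := hf.fderiv_right (by norm_num)
  have h2 : DifferentiableAt ℝ (fun x => fderiv ℝ f x 1) ξ :=
    (h1.differentiableAt (by norm_num)).clm_apply (differentiableAt_const _)
  have he : (fun x => fderiv ℝ f x 1) = deriv f := by
    funext x; exact fderiv_apply_one_eq_deriv
  exact he ▸ h2

/-- If φ, f, h satisfy the three soliton ODEs and φ'/φ = k·(f'/f), then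
x = f'/f and y = h' + ((n−2)k − m)(f'/f) satisfy the planar system
y' = [m + (n−2)k²]x² − 2kxy, x' = xy. -/
theorem stmt_4 (n m : ℕ) (hn : 3 ≤ n) (hm : 1 ≤ m) (k : ℝ) (hk : 0 < k)
    (a b : ℝ) (I : Set ℝ) (hI : I = Set.Ioo a b)
    (φ f h : ℝ → ℝ)
    (hφreg : ∀ ξ ∈ I, ContDiffAt ℝ 2 φ ξ)
    (hfreg : ∀ ξ ∈ I, ContDiffAt ℝ 2 f ξ)
    (hhreg : ∀ ξ ∈ I, ContDiffAt ℝ 2 h ξ)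
    (hφpos : ∀ ξ ∈ I, 0 < φ ξ) (hfpos : ∀ ξ ∈ I, 0 < f ξ)
    (hf' : ∀ ξ ∈ I, deriv f ξ ≠ 0)
    (hode1 : ∀ ξ ∈ I,
      ((n : ℝ) - 2) * deriv (deriv φ) ξ / φ ξ + deriv (deriv h) ξ
        - (m : ℝ) * deriv (deriv f) ξ / f ξ
        - 2 * (m : ℝ) * (deriv φ ξ / φ ξ) * (deriv f ξ / f ξ)
        + 2 * (deriv φ ξ / φ ξ) * deriv h ξ = 0)
    (hode2 : ∀ ξ ∈ I,
      deriv (deriv φ) ξ / φ ξ - ((n : ℝ) - 1) * (deriv φ ξ / φ ξ) ^ 2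
        + (m : ℝ) * (deriv φ ξ / φ ξ) * (deriv f ξ / f ξ)
        - (deriv φ ξ / φ ξ) * deriv h ξ = 0)
    (hode3 : ∀ ξ ∈ I,
      -(deriv (deriv f) ξ / f ξ)
        + ((n : ℝ) - 2) * (deriv φ ξ / φ ξ) * (deriv f ξ / f ξ)
        - ((m : ℝ) - 1) * (deriv f ξ / f ξ) ^ 2
        + (deriv f ξ / f ξ) * deriv h ξ = 0)
    (hprop : ∀ ξ ∈ I, deriv φ ξ / φ ξ = k * (deriv f ξ / f ξ))
    (x y : ℝ → ℝ)
    (hx : x = fun ξ => deriv f ξ / f ξ)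
    (hy : y = fun ξ => deriv h ξ + (((n : ℝ) - 2) * k - (m : ℝ)) * (deriv f ξ / f ξ)) :
    ∀ ξ ∈ I,
      deriv y ξ = ((m : ℝ) + ((n : ℝ) - 2) * k ^ 2) * x ξ ^ 2 - 2 * k * x ξ * y ξ ∧
      deriv x ξ = x ξ * y ξ := by
  subst hx hy
  intro ξ hξ
  have hFpos := hfpos ξ hξ
  have hF : f ξ ≠ 0 := ne_of_gt hFpos
  have hP : φ ξ ≠ 0 := ne_of_gt (hφpos ξ hξ)
  have hdf : DifferentiableAt ℝ f ξ := (hfreg ξ hξ).differentiableAt (by norm_num)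
  have hdf2 : DifferentiableAt ℝ (deriv f) ξ := diffAt_deriv_of_contDiffAt (hfreg ξ hξ)
  have hdh2 : DifferentiableAt ℝ (deriv h) ξ := diffAt_deriv_of_contDiffAt (hhreg ξ hξ)
  -- derivative of x
  have hxderiv : deriv (fun ξ => deriv f ξ / f ξ) ξ
      = deriv (deriv f) ξ / f ξ - (deriv f ξ / f ξ) ^ 2 := by
    rw [deriv_fun_div hdf2 hdf hF]
    field_simp
  -- derivative of y
  have hdivdiff : DifferentiableAt ℝ (fun ξ => deriv f ξ / f ξ) ξ := hdf2.div hdf hF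
  have hyderiv : deriv (fun ξ => deriv h ξ
        + (((n : ℝ) - 2) * k - (m : ℝ)) * (deriv f ξ / f ξ)) ξ
      = deriv (deriv h) ξ + (((n : ℝ) - 2) * k - (m : ℝ))
          * (deriv (deriv f) ξ / f ξ - (deriv f ξ / f ξ) ^ 2) := by
    rw [deriv_fun_add hdh2 (hdivdiff.const_mul _), deriv_const_mul _ hdivdiff, hxderiv]
  have h1 := hode1 ξ hξ
  have h2 := hode2 ξ hξ
  have h3 := hode3 ξ hξ
  have hp := hprop ξ hξ
  rw [hp] at h1 h2 h3
  constructor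
  · rw [hyderiv]
    linear_combination h1 - ((n : ℝ) - 2) * h2 - ((n : ℝ) - 2) * k * h3
  · rw [hxderiv]
    linear_combination -h3
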